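/- Let z = x + iy be a complex number with y ≠ 0. Define S(w) = arcsin(β(w)) + i·sign(Im w)·arcosh(α(w)) and Y(w) = α(w)·√(1−β(w)²) − i·sign(Im w)·β(w)·√(α(w)²−1), where α(w) = (|w−1|+|w+1|)/2 and β(w) = (|w+1|−|w−1|)/2. Then the function w ↦ w·S(w) + Y(w) is complex differentiable at z with derivative equal to S(z); that is, z·S(z) + Y(z) is an antiderivative of the principal branch of the inverse sine. -/

import Mathlib

open Complex

/-- Real inverse hyperbolic cosine, `arcosh t = ln (t + √(t²-1))`. -/
noncomputable def arcosh (t : ℝ) : ℝ := Real.log (t + Real.sqrt (t ^ 2 - 1))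

/-- `α(w) = (|w-1| + |w+1|)/2`. -/
noncomputable def alpha (w : ℂ) : ℝ := (‖w - 1‖ + ‖w + 1‖) / 2

/-- `β(w) = (|w+1| - |w-1|)/2`. -/
noncomputable def beta (w : ℂ) : ℝ := (‖w + 1‖ - ‖w - 1‖) / 2

/-- Principal branch `S(w)` of the inverse sine. -/
noncomputable def S (w : ℂ) : ℂ :=
  (Real.arcsin (beta w) : ℝ) + Complex.I * (Real.sign w.im : ℝ) * (arcosh (alpha w) : ℝ)

/-- Principal branch `Y(w)` of `√(1-w²)`. -/
noncomputable def Y (w : ℂ) : ℂ :=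
  (alpha w * Real.sqrt (1 - (beta w) ^ 2) : ℝ) -
    Complex.I * (Real.sign w.im : ℝ) * (beta w * Real.sqrt ((alpha w) ^ 2 - 1) : ℝ)

lemma exp_neg_arcosh {a : ℝ} (ha : 1 ≤ a) :
    Real.exp (-(arcosh a)) = a - Real.sqrt (a ^ 2 - 1) := by
  have h0 : (0:ℝ) ≤ a ^ 2 - 1 := by nlinarith
  have hs : Real.sqrt (a ^ 2 - 1) ^ 2 = a ^ 2 - 1 := Real.sq_sqrt h0
  have hsn : 0 ≤ Real.sqrt (a ^ 2 - 1) := Real.sqrt_nonneg _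
  have ht : 0 < a + Real.sqrt (a ^ 2 - 1) := by nlinarith
  rw [Real.exp_neg, arcosh, Real.exp_log ht]
  exact inv_eq_of_mul_eq_one_right (by nlinarith)

lemma cosh_arcosh {a : ℝ} (ha : 1 ≤ a) : Real.cosh (arcosh a) = a := by
  have h0 : (0:ℝ) ≤ a ^ 2 - 1 := by nlinarith
  have ht : 0 < a + Real.sqrt (a ^ 2 - 1) := by
    have := Real.sqrt_nonneg (a ^ 2 - 1); linarith
  rw [Real.cosh_eq, arcosh, Real.exp_log ht, ← arcosh, exp_neg_arcosh ha]
  ring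

lemma sinh_arcosh {a : ℝ} (ha : 1 ≤ a) : Real.sinh (arcosh a) = Real.sqrt (a ^ 2 - 1) := by
  have h0 : (0:ℝ) ≤ a ^ 2 - 1 := by nlinarith
  have ht : 0 < a + Real.sqrt (a ^ 2 - 1) := by
    have := Real.sqrt_nonneg (a ^ 2 - 1); linarith
  rw [Real.sinh_eq, arcosh, Real.exp_log ht, ← arcosh, exp_neg_arcosh ha]
  ring

lemma hab (w : ℂ) : alpha w * beta w = w.re := by
  have h1 : ‖w + 1‖ ^ 2 = (w.re + 1) ^ 2 + w.im ^ 2 := by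
    rw [Complex.sq_norm, Complex.normSq_apply]; simp; ring
  have h2 : ‖w - 1‖ ^ 2 = (w.re - 1) ^ 2 + w.im ^ 2 := by
    rw [Complex.sq_norm, Complex.normSq_apply]; simp; ring
  unfold alpha beta; nlinarith [h1, h2]

lemma hsum (w : ℂ) : alpha w ^ 2 + beta w ^ 2 = w.re ^ 2 + w.im ^ 2 + 1 := by
  have h1 : ‖w + 1‖ ^ 2 = (w.re + 1) ^ 2 + w.im ^ 2 := by
    rw [Complex.sq_norm, Complex.normSq_apply]; simp; ring
  have h2 : ‖w - 1‖ ^ 2 = (w.re - 1) ^ 2 + w.im ^ 2 := by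
    rw [Complex.sq_norm, Complex.normSq_apply]; simp; ring
  unfold alpha beta; nlinarith [h1, h2]

lemma alpha_ge_one (w : ℂ) : 1 ≤ alpha w := by
  have h := norm_sub_le (w + 1) (w - 1)
  have h2 : ((w + 1) - (w - 1)) = 2 := by ring
  rw [h2] at h
  simp only [Complex.norm_two] at h
  unfold alpha; linarith

lemma beta_sq_le_one (w : ℂ) : beta w ^ 2 ≤ 1 := by
  have h : |‖w + 1‖ - ‖w - 1‖| ≤ ‖(w + 1) - (w - 1)‖ :=
    abs_norm_sub_norm_le _ _
  have h2 : ((w + 1) - (w - 1)) = 2 := by ring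
  rw [h2] at h
  simp [Complex.norm_two] at h
  have := abs_le.mp h
  unfold beta; nlinarith [this.1, this.2]

lemma key_prod (w : ℂ) : (1 - beta w ^ 2) * (alpha w ^ 2 - 1) = w.im ^ 2 := by
  have h1 := hab w
  have h2 := hsum w
  have h3 : (alpha w * beta w) ^ 2 = w.re ^ 2 := by rw [h1]
  linear_combination h2 - h3

lemma alpha_gt_one {w : ℂ} (hw : w.im ≠ 0) : 1 < alpha w := by
  by_contra hle
  push_neg at hle
  have ha : alpha w = 1 := le_antisymm hle (alpha_ge_one w)
  have h0 : w.im ^ 2 = 0 := by rw [← key_prod w, ha]; ring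
  exact hw (by nlinarith)

lemma beta_sq_lt_one {w : ℂ} (hw : w.im ≠ 0) : beta w ^ 2 < 1 := by
  by_contra hle
  push_neg at hle
  have hb : beta w ^ 2 = 1 := le_antisymm (beta_sq_le_one w) hle
  have h0 : w.im ^ 2 = 0 := by rw [← key_prod w, hb]; ring
  exact hw (by nlinarith)

lemma sign_sq {w : ℂ} (hw : w.im ≠ 0) : (Real.sign w.im) ^ 2 = 1 := by
  rcases lt_or_gt_of_ne hw with h | h
  · rw [Real.sign_of_neg h]; norm_num
  · rw [Real.sign_of_pos h]; norm_num

lemma sin_S {w : ℂ} (hw : w.im ≠ 0) : Complex.sin (S w) = w := by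
  have hb := beta_sq_le_one w
  have hb1 : -1 ≤ beta w := by nlinarith
  have hb2 : beta w ≤ 1 := by nlinarith
  have ha := alpha_ge_one w
  set s := Real.sign w.im with hs
  have hS : S w = (Real.arcsin (beta w) : ℂ) + (s * arcosh (alpha w) : ℝ) * Complex.I := by
    unfold S; push_cast; ring
  rw [hS, Complex.sin_add_mul_I]
  rw [← Complex.ofReal_sin, ← Complex.ofReal_cos, ← Complex.ofReal_cosh, ← Complex.ofReal_sinh]
  rw [Real.sin_arcsin hb1 hb2, Real.cos_arcsin]
  have hcosh : Real.cosh (s * arcosh (alpha w)) = alpha w := by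
    rcases lt_or_gt_of_ne hw with h | h
    · rw [hs, Real.sign_of_neg h, neg_one_mul, Real.cosh_neg]; exact cosh_arcosh ha
    · rw [hs, Real.sign_of_pos h, one_mul]; exact cosh_arcosh ha
  have hsinh : Real.sinh (s * arcosh (alpha w)) = s * Real.sqrt (alpha w ^ 2 - 1) := by
    rcases lt_or_gt_of_ne hw with h | h
    · rw [hs, Real.sign_of_neg h, neg_one_mul, Real.sinh_neg, sinh_arcosh ha]; ring
    · rw [hs, Real.sign_of_pos h, one_mul, sinh_arcosh ha]; ring
  rw [hcosh, hsinh]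
  have him : Real.sqrt (1 - beta w ^ 2) * (s * Real.sqrt (alpha w ^ 2 - 1)) = w.im := by
    rw [show Real.sqrt (1 - beta w ^ 2) * (s * Real.sqrt (alpha w ^ 2 - 1))
        = s * (Real.sqrt (1 - beta w ^ 2) * Real.sqrt (alpha w ^ 2 - 1)) by ring]
    rw [← Real.sqrt_mul (by nlinarith), key_prod w, Real.sqrt_sq_eq_abs]
    rcases lt_or_gt_of_ne hw with h | h
    · rw [hs, Real.sign_of_neg h, abs_of_neg h]; ring
    · rw [hs, Real.sign_of_pos h, abs_of_pos h]; ring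
  rw [Complex.ext_iff]
  constructor
  · simp [hab w]; ring_nf; rw [mul_comm]; exact hab w
  · simp; exact him

lemma cos_S {w : ℂ} (hw : w.im ≠ 0) : Complex.cos (S w) = Y w := by
  have hb := beta_sq_le_one w
  have hb1 : -1 ≤ beta w := by nlinarith
  have hb2 : beta w ≤ 1 := by nlinarith
  have ha := alpha_ge_one w
  set s := Real.sign w.im with hs
  have hS : S w = (Real.arcsin (beta w) : ℂ) + (s * arcosh (alpha w) : ℝ) * Complex.I := by
    unfold S; push_cast; ring
  rw [hS, Complex.cos_add_mul_I]
  rw [← Complex.ofReal_sin, ← Complex.ofReal_cos, ← Complex.ofReal_cosh, ← Complex.ofReal_sinh]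
  rw [Real.sin_arcsin hb1 hb2, Real.cos_arcsin]
  have hcosh : Real.cosh (s * arcosh (alpha w)) = alpha w := by
    rcases lt_or_gt_of_ne hw with h | h
    · rw [hs, Real.sign_of_neg h, neg_one_mul, Real.cosh_neg]; exact cosh_arcosh ha
    · rw [hs, Real.sign_of_pos h, one_mul]; exact cosh_arcosh ha
  have hsinh : Real.sinh (s * arcosh (alpha w)) = s * Real.sqrt (alpha w ^ 2 - 1) := by
    rcases lt_or_gt_of_ne hw with h | h
    · rw [hs, Real.sign_of_neg h, neg_one_mul, Real.sinh_neg, sinh_arcosh ha]; ring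
    · rw [hs, Real.sign_of_pos h, one_mul, sinh_arcosh ha]; ring
  rw [hcosh, hsinh]
  unfold Y
  push_cast
  ring

lemma Y_ne_zero {w : ℂ} (hw : w.im ≠ 0) : Y w ≠ 0 := by
  intro hY
  have hre : (Y w).re = alpha w * Real.sqrt (1 - beta w ^ 2) := by
    unfold Y; simp
  have h1 : 0 < alpha w := by linarith [alpha_gt_one hw]
  have h2 : 0 < Real.sqrt (1 - beta w ^ 2) := Real.sqrt_pos.mpr (by nlinarith [beta_sq_lt_one hw])
  rw [hY] at hre
  simp at hre
  rcases hre with h3 | h3 <;> linarith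

lemma continuousAt_S {z : ℂ} (h : z.im ≠ 0) : ContinuousAt S z := by
  set s := Real.sign z.im with hs
  have heq : ∀ᶠ w in nhds z, S w =
      (Real.arcsin (beta w) : ℂ) + Complex.I * (s : ℂ) * (arcosh (alpha w) : ℂ) := by
    rcases lt_or_gt_of_ne h with hlt | hgt
    · filter_upwards [Complex.continuous_im.continuousAt.eventually_lt continuousAt_const hlt]
        with w hw
      unfold S; rw [hs, Real.sign_of_neg hw, Real.sign_of_neg hlt]
    · filter_upwards [continuousAt_const.eventually_lt Complex.continuous_im.continuousAt hgt]
        with w hw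
      unfold S; rw [hs, Real.sign_of_pos hw, Real.sign_of_pos hgt]
  have hca : Continuous alpha :=
    ((continuous_norm.comp (continuous_id.sub continuous_const)).add
      (continuous_norm.comp (continuous_id.add continuous_const))).div_const 2
  have hcb : Continuous beta :=
    ((continuous_norm.comp (continuous_id.add continuous_const)).sub
      (continuous_norm.comp (continuous_id.sub continuous_const))).div_const 2
  have harc : ContinuousAt arcosh (alpha z) := by
    have hpos : 0 < alpha z + Real.sqrt (alpha z ^ 2 - 1) := by
      have := Real.sqrt_nonneg (alpha z ^ 2 - 1)
      linarith [alpha_ge_one z]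
    unfold arcosh
    exact ContinuousAt.log (by fun_prop) hpos.ne'
  have hc : ContinuousAt (fun w =>
      (Real.arcsin (beta w) : ℂ) + Complex.I * (s : ℂ) * (arcosh (alpha w) : ℂ)) z := by
    apply ContinuousAt.add
    · exact Complex.continuous_ofReal.continuousAt.comp
        (Real.continuous_arcsin.continuousAt.comp hcb.continuousAt)
    · exact continuousAt_const.mul (Complex.continuous_ofReal.continuousAt.comp
        (harc.comp hca.continuousAt))
  exact hc.congr (heq.mono fun w hw => hw.symm)

theorem stmt11 (z : ℂ) (h : z.im ≠ 0) :
    HasDerivAt (fun w : ℂ => w * S w + Y w) (S z) z := by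
  have hev : ∀ᶠ w in nhds z, w.im ≠ 0 :=
    Complex.continuous_im.continuousAt.eventually_ne h
  have hsin : ∀ᶠ w in nhds z, Complex.sin (S w) = w := by
    filter_upwards [hev] with w hw; exact sin_S hw
  have hYne : Y z ≠ 0 := Y_ne_zero h
  have hcosne : Complex.cos (S z) ≠ 0 := by rw [cos_S h]; exact hYne
  have hS : HasDerivAt S (Complex.cos (S z))⁻¹ z :=
    HasDerivAt.of_local_left_inverse (continuousAt_S h) (Complex.hasDerivAt_sin (S z)) hcosne hsin
  have hY : HasDerivAt Y (-Complex.sin (S z) * (Complex.cos (S z))⁻¹) z := by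
    have h1 : HasDerivAt (fun w => Complex.cos (S w))
        (-Complex.sin (S z) * (Complex.cos (S z))⁻¹) z :=
      (Complex.hasDerivAt_cos (S z)).comp z hS
    apply h1.congr_of_eventuallyEq
    filter_upwards [hev] with w hw
    exact (cos_S hw).symm
  have := ((hasDerivAt_id z).mul hS).add hY
  rw [sin_S h] at this
  have e : S z = 1 * S z + id z * (Complex.cos (S z))⁻¹ + -z * (Complex.cos (S z))⁻¹ := by
    simp only [id, one_mul]; ring
  rw [e]; exact this
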